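/- arXiv:2504.01562 — 3 statements merged into one kernel-verified Lean document; each statement's English description precedes it below -/
import Mathlib

section
/- The integral operator (Af)(t) = ((1-ε)/π) ∫₀^∞ (e^{-r}/(e^{r+t}-1)) f(r) dr satisfies the bound ∫₀^∞ (1-e^{-t})^{1/2} (∫₀^∞ (1-e^{-r})^{-1/2} (e^{r+t}-1)^{-1} dr) g(t)² dt ≤ π ∫₀^∞ g(t)² dt; specifically, for every t > 0, (1-e^{-t})^{1/2} ∫₀^∞ (1-e^{-r})^{-1/2} (e^{r+t}-1)^{-1} dr ≤ π. -/
open Real MeasureTheory Set Filter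

/-- The pointwise Schur-test bound: for every t > 0,
(1-e^{-t})^{1/2} ∫₀^∞ (1-e^{-r})^{-1/2}/(e^{r+t}-1) dr ≤ π. -/
theorem schur_test_pointwise_bound (t : ℝ) (ht : 0 < t) :
    (1 - Real.exp (-t)) ^ ((1:ℝ)/2) *
      ∫ r in Set.Ioi (0:ℝ), (1 - Real.exp (-r)) ^ (-(1:ℝ)/2) / (Real.exp (r + t) - 1)
    ≤ Real.pi := by
  have het : (1:ℝ) < Real.exp t := by simpa using Real.exp_lt_exp.mpr (by linarith : (0:ℝ) < t)
  set b : ℝ := Real.exp t - 1 with hbdef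
  have hb : 0 < b := by simp [hbdef]; linarith
  set c : ℝ := Real.sqrt b with hcdef
  have hc : 0 < c := Real.sqrt_pos.mpr hb
  set F : ℝ → ℝ := fun r => (2 / c) * Real.arctan (Real.sqrt ((1 - Real.exp (-r)) / b)) with hF
  -- derivative
  have hderiv : ∀ r ∈ Set.Ioi (0:ℝ), HasDerivAt F
      ((1 - Real.exp (-r)) ^ (-(1:ℝ)/2) / (Real.exp (r + t) - 1)) r := by
    intro r hr
    have hr0 : (0:ℝ) < r := hr
    have hex : Real.exp (-r) < 1 := Real.exp_lt_one_iff.mpr (by linarith)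
    have h1 : (0:ℝ) < 1 - Real.exp (-r) := by linarith
    have hq : (0:ℝ) < (1 - Real.exp (-r)) / b := div_pos h1 hb
    have d1 : HasDerivAt (fun r : ℝ => (1 - Real.exp (-r)) / b) (Real.exp (-r) / b) r := by
      have : HasDerivAt (fun r : ℝ => 1 - Real.exp (-r)) (Real.exp (-r)) r := by
        simpa using ((Real.hasDerivAt_exp (-r)).comp r (hasDerivAt_neg r)).const_sub 1
      simpa using this.div_const b
    have d2 := (d1.sqrt (ne_of_gt hq)).arctan.const_mul (2 / c)
    convert d2 using 1
    case e'_4 => rfl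
    case e'_5 => rfl
    have hsq : Real.sqrt ((1 - Real.exp (-r)) / b) ^ 2 = (1 - Real.exp (-r)) / b :=
      Real.sq_sqrt hq.le
    rw [hsq]
    have hsqv : Real.sqrt ((1 - Real.exp (-r)) / b)
        = Real.sqrt (1 - Real.exp (-r)) / c := by
      rw [Real.sqrt_div h1.le]
    rw [hsqv]
    have hrpow : (1 - Real.exp (-r)) ^ (-(1:ℝ)/2) = (Real.sqrt (1 - Real.exp (-r)))⁻¹ := by
      rw [Real.sqrt_eq_rpow, ← Real.rpow_neg h1.le]
      norm_num
    rw [hrpow]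
    have hE : Real.exp (r + t) - 1 = Real.exp r * (Real.exp t - Real.exp (-r)) := by
      rw [mul_sub, ← Real.exp_add, ← Real.exp_add]
      simp
    have hs1 : (0:ℝ) < Real.sqrt (1 - Real.exp (-r)) := Real.sqrt_pos.mpr h1
    have hEt : (0:ℝ) < Real.exp t - Real.exp (-r) := by linarith
    have hc2 : c ^ 2 = b := Real.sq_sqrt hb.le
    rw [hE]
    have hb' : (1:ℝ) + (1 - Real.exp (-r)) / b = (Real.exp t - Real.exp (-r)) / b := by
      field_simp
      ring
    rw [hb']
    have her : Real.exp r * Real.exp (-r) = 1 := by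
      rw [← Real.exp_add]; simp
    have hexr : Real.exp r ≠ 0 := (Real.exp_pos r).ne'
    set A := Real.sqrt (1 - Real.exp (-r)) with hA
    rw [Real.exp_neg]
    set E := Real.exp r with hEdef
    have hA0 : A ≠ 0 := hs1.ne'
    have hEt' : Real.exp t - E⁻¹ ≠ 0 := by
      rw [← Real.exp_neg]; exact hEt.ne'
    field_simp
  have hcont : ContinuousWithinAt F (Set.Ici 0) 0 := by
    apply Continuous.continuousWithinAt
    exact continuous_const.mul (Real.continuous_arctan.comp (Real.continuous_sqrt.comp
      ((continuous_const.sub (Real.continuous_exp.comp continuous_neg)).div_const b)))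
  have hnonneg : ∀ r ∈ Set.Ioi (0:ℝ),
      0 ≤ (1 - Real.exp (-r)) ^ (-(1:ℝ)/2) / (Real.exp (r + t) - 1) := by
    intro r hr
    have hr0 : (0:ℝ) < r := hr
    have h2 : (1:ℝ) < Real.exp (r + t) := by
      rw [show (1:ℝ) = Real.exp 0 by simp]
      exact Real.exp_lt_exp.mpr (by linarith)
    have h3 : (0:ℝ) < Real.exp (r + t) - 1 := by linarith
    have hex : Real.exp (-r) < 1 := Real.exp_lt_one_iff.mpr (by linarith)
    have h1 : (0:ℝ) < 1 - Real.exp (-r) := by linarith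
    positivity
  have htend : Filter.Tendsto F Filter.atTop
      (nhds ((2 / c) * Real.arctan (Real.sqrt (1 / b)))) := by
    apply Filter.Tendsto.const_mul
    apply Filter.Tendsto.comp Real.continuous_arctan.continuousAt
    apply Filter.Tendsto.comp Real.continuous_sqrt.continuousAt
    have h4 : Filter.Tendsto (fun r : ℝ => 1 - Real.exp (-r)) Filter.atTop (nhds 1) := by
      have := Real.tendsto_exp_neg_atTop_nhds_zero
      simpa using (tendsto_const_nhds (x := (1:ℝ))).sub this
    simpa using h4.div_const b
  have hint := MeasureTheory.integral_Ioi_of_hasDerivAt_of_nonneg hcont hderiv hnonneg htend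
  have hF0 : F 0 = 0 := by simp [hF]
  rw [hint, hF0, sub_zero]
  have harctan : Real.arctan (Real.sqrt (1 / b)) ≤ Real.pi / 2 :=
    (Real.arctan_lt_pi_div_two _).le
  have hsle : Real.sqrt (1 - Real.exp (-t)) ≤ c := by
    apply Real.sqrt_le_sqrt
    have h5 := Real.exp_pos (-t)
    have h6 : Real.exp (-t) * Real.exp t = 1 := by rw [← Real.exp_add]; simp
    nlinarith
  have h1t : (0:ℝ) ≤ 1 - Real.exp (-t) := by
    have : Real.exp (-t) < 1 := Real.exp_lt_one_iff.mpr (by linarith)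
    linarith
  have hrp : (1 - Real.exp (-t)) ^ ((1:ℝ)/2) = Real.sqrt (1 - Real.exp (-t)) := by
    rw [Real.sqrt_eq_rpow]
  rw [hrp]
  calc Real.sqrt (1 - Real.exp (-t)) * ((2 / c) * Real.arctan (Real.sqrt (1 / b)))
      ≤ c * ((2 / c) * (Real.pi / 2)) := by
        apply mul_le_mul hsle ?_ ?_ hc.le
        · exact mul_le_mul_of_nonneg_left harctan (by positivity)
        · exact mul_nonneg (by positivity)
            (by simpa using Real.arctan_strictMono.monotone (Real.sqrt_nonneg (1/b)))
    _ = Real.pi := by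
        field_simp
end

section
/- For every ε ∈ (0,1), the operator A : L²(ℝ₊) → L²(ℝ₊) given by (Af)(t) = ((1-ε)/π) ∫₀^∞ e^{-r}/(e^{r+t}-1) f(r) dr is a well-defined bounded operator with operator norm at most 1-ε, i.e. ‖Af‖ ≤ (1-ε)‖f‖ for all f ∈ L²(ℝ₊). -/
open MeasureTheory Set Real
open scoped ENNReal NNReal


lemma core_deriv (a c : ℝ) (ha : 0 < a) (hc : 0 < c) {x : ℝ} (hx : 0 < x) :
    HasDerivAt (fun y => (2 / Real.sqrt (a*c)) *
        Real.arctan (Real.sqrt (c/a) * Real.sqrt (1 - Real.exp (-y))))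
      (Real.exp (-x) / ((a + c * (1 - Real.exp (-x))) * Real.sqrt (1 - Real.exp (-x)))) x := by
  have hu : 0 < 1 - Real.exp (-x) := by
    have : Real.exp (-x) < 1 := by
      rw [Real.exp_lt_one_iff]; linarith
    linarith
  set u := 1 - Real.exp (-x) with hudef
  have h1 : HasDerivAt (fun y => 1 - Real.exp (-y)) (Real.exp (-x)) x := by
    have := ((Real.hasDerivAt_exp (-x)).comp x (hasDerivAt_neg x)).const_sub 1
    simpa using this
  have h2 : HasDerivAt (fun y => Real.sqrt (1 - Real.exp (-y)))
      (1 / (2 * Real.sqrt u) * Real.exp (-x)) x :=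
    (Real.hasDerivAt_sqrt hu.ne').comp x h1
  have h3 := h2.const_mul (Real.sqrt (c/a))
  have h4 := ((Real.hasDerivAt_arctan (Real.sqrt (c/a) * Real.sqrt u)).comp x h3).const_mul
      (2 / Real.sqrt (a*c))
  refine h4.congr_deriv ?_
  symm
  have hsa : (0:ℝ) < Real.sqrt a := Real.sqrt_pos.2 ha
  have hsc : (0:ℝ) < Real.sqrt c := Real.sqrt_pos.2 hc
  have hsu : (0:ℝ) < Real.sqrt u := Real.sqrt_pos.2 hu
  have hca : Real.sqrt (c/a) = Real.sqrt c / Real.sqrt a := Real.sqrt_div hc.le a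
  have h5 : (Real.sqrt (c/a) * Real.sqrt u)^2 = c/a * u := by
    rw [mul_pow, Real.sq_sqrt (div_nonneg hc.le ha.le), Real.sq_sqrt hu.le]
  have hacu : 0 < a + c * u := by positivity
  have ha2 : Real.sqrt a * Real.sqrt a = a := Real.mul_self_sqrt ha.le
  rw [h5, Real.sqrt_mul ha.le, hca]
  field_simp
  ring_nf
  rw [Real.sq_sqrt ha.le]


lemma core_integral (a c : ℝ) (ha : 0 < a) (hc : 0 < c) :
    ∫ s in Ioi (0:ℝ),
      Real.exp (-s) / ((a + c * (1 - Real.exp (-s))) * Real.sqrt (1 - Real.exp (-s)))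
      = (2 / Real.sqrt (a*c)) * Real.arctan (Real.sqrt (c/a)) := by
  have hg0 : (2 / Real.sqrt (a*c)) *
      Real.arctan (Real.sqrt (c/a) * Real.sqrt (1 - Real.exp (-(0:ℝ)))) = 0 := by
    simp
  have hcont : ContinuousWithinAt (fun y => (2 / Real.sqrt (a*c)) *
      Real.arctan (Real.sqrt (c/a) * Real.sqrt (1 - Real.exp (-y)))) (Ici 0) 0 := by
    apply Continuous.continuousWithinAt
    exact continuous_const.mul (Real.continuous_arctan.comp (continuous_const.mul ((continuous_const.sub (Real.continuous_exp.comp continuous_neg)).sqrt)))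
  have htend : Filter.Tendsto (fun y => (2 / Real.sqrt (a*c)) *
      Real.arctan (Real.sqrt (c/a) * Real.sqrt (1 - Real.exp (-y)))) Filter.atTop
      (nhds ((2 / Real.sqrt (a*c)) * Real.arctan (Real.sqrt (c/a)))) := by
    have h1 : Filter.Tendsto (fun y : ℝ => 1 - Real.exp (-y)) Filter.atTop (nhds 1) := by
      have := Real.tendsto_exp_neg_atTop_nhds_zero
      simpa using this.const_sub 1
    have h2 := ((Real.continuous_sqrt.tendsto 1).comp h1)
    have h3 : Filter.Tendsto (fun y : ℝ => Real.sqrt (c/a) * Real.sqrt (1 - Real.exp (-y)))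
        Filter.atTop (nhds (Real.sqrt (c/a))) := by
      simpa using h2.const_mul (Real.sqrt (c/a))
    exact ((Real.continuous_arctan.tendsto _).comp h3).const_mul _
  have hpos : ∀ s ∈ Ioi (0:ℝ),
      0 ≤ Real.exp (-s) / ((a + c * (1 - Real.exp (-s))) * Real.sqrt (1 - Real.exp (-s))) := by
    intro s hs
    have hu : 0 ≤ 1 - Real.exp (-s) := by
      have : Real.exp (-s) ≤ 1 := by
        rw [Real.exp_le_one_iff]; simp at hs ⊢; linarith
      linarith
    have : 0 ≤ a + c * (1 - Real.exp (-s)) := by positivity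
    positivity
  have := integral_Ioi_of_hasDerivAt_of_nonneg hcont
    (fun s hs => core_deriv a c ha hc hs) hpos htend
  rw [this, hg0, sub_zero]

lemma core_integrable (a c : ℝ) (ha : 0 < a) (hc : 0 < c) :
    IntegrableOn (fun s =>
      Real.exp (-s) / ((a + c * (1 - Real.exp (-s))) * Real.sqrt (1 - Real.exp (-s)))) (Ioi 0) := by
  have hcont : ContinuousWithinAt (fun y => (2 / Real.sqrt (a*c)) *
      Real.arctan (Real.sqrt (c/a) * Real.sqrt (1 - Real.exp (-y)))) (Ici 0) 0 := by
    apply Continuous.continuousWithinAt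
    exact continuous_const.mul (Real.continuous_arctan.comp (continuous_const.mul ((continuous_const.sub (Real.continuous_exp.comp continuous_neg)).sqrt)))
  have htend : Filter.Tendsto (fun y => (2 / Real.sqrt (a*c)) *
      Real.arctan (Real.sqrt (c/a) * Real.sqrt (1 - Real.exp (-y)))) Filter.atTop
      (nhds ((2 / Real.sqrt (a*c)) * Real.arctan (Real.sqrt (c/a)))) := by
    have h1 : Filter.Tendsto (fun y : ℝ => 1 - Real.exp (-y)) Filter.atTop (nhds 1) := by
      have := Real.tendsto_exp_neg_atTop_nhds_zero
      simpa using this.const_sub 1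
    have h2 := ((Real.continuous_sqrt.tendsto 1).comp h1)
    have h3 : Filter.Tendsto (fun y : ℝ => Real.sqrt (c/a) * Real.sqrt (1 - Real.exp (-y)))
        Filter.atTop (nhds (Real.sqrt (c/a))) := by
      simpa using h2.const_mul (Real.sqrt (c/a))
    exact ((Real.continuous_arctan.tendsto _).comp h3).const_mul _
  have hpos : ∀ s ∈ Ioi (0:ℝ),
      0 ≤ Real.exp (-s) / ((a + c * (1 - Real.exp (-s))) * Real.sqrt (1 - Real.exp (-s))) := by
    intro s hs
    have hu : 0 ≤ 1 - Real.exp (-s) := by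
      have : Real.exp (-s) ≤ 1 := by
        rw [Real.exp_le_one_iff]; simp at hs ⊢; linarith
      linarith
    have : 0 ≤ a + c * (1 - Real.exp (-s)) := by positivity
    positivity
  exact integrableOn_Ioi_deriv_of_nonneg hcont (fun s hs => core_deriv a c ha hc hs) hpos htend

lemma schur_bound (a c A : ℝ) (ha : 0 < a) (hc : 0 < c) (hA : 0 ≤ A)
    (hAc : A ≤ Real.sqrt (a*c)) :
    ∫⁻ s in Ioi (0:ℝ), ENNReal.ofReal (A * (Real.exp (-s) /
      ((a + c * (1 - Real.exp (-s))) * Real.sqrt (1 - Real.exp (-s)))))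
      ≤ ENNReal.ofReal Real.pi := by
  have hI : IntegrableOn (fun s => A * (Real.exp (-s) /
      ((a + c * (1 - Real.exp (-s))) * Real.sqrt (1 - Real.exp (-s))))) (Ioi 0) :=
    (core_integrable a c ha hc).const_mul A
  have hnn : 0 ≤ᵐ[volume.restrict (Ioi (0:ℝ))] (fun s => A * (Real.exp (-s) /
      ((a + c * (1 - Real.exp (-s))) * Real.sqrt (1 - Real.exp (-s))))) := by
    rw [Filter.EventuallyLE, ae_restrict_iff' measurableSet_Ioi]
    filter_upwards with s hs
    have hu : 0 ≤ 1 - Real.exp (-s) := by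
      have : Real.exp (-s) ≤ 1 := by
        rw [Real.exp_le_one_iff]; simp at hs ⊢; linarith
      linarith
    have h0 : 0 ≤ a + c * (1 - Real.exp (-s)) := by positivity
    positivity
  rw [← ofReal_integral_eq_lintegral_ofReal hI hnn]
  apply ENNReal.ofReal_le_ofReal
  rw [MeasureTheory.integral_const_mul, core_integral a c ha hc]
  set s := Real.sqrt (a*c) with hs
  have hs0 : 0 < s := Real.sqrt_pos.2 (by positivity)
  set k := Real.sqrt (c/a)
  have ht : Real.arctan k ≤ Real.pi / 2 := (Real.arctan_lt_pi_div_two k).le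
  have ht0 : 0 ≤ Real.arctan k := by
    rw [← Real.arctan_zero]
    exact Real.arctan_strictMono.monotone (Real.sqrt_nonneg _)
  have h1 : A * (2 / s * Real.arctan k) = 2 * (A * Real.arctan k) / s := by ring
  rw [h1]
  have h2 : A * Real.arctan k ≤ s * (Real.pi / 2) :=
    mul_le_mul hAc ht ht0 hs0.le
  calc 2 * (A * Real.arctan k) / s ≤ 2 * (s * (Real.pi / 2)) / s := by
        gcongr
    _ = Real.pi := by field_simp

lemma exp_neg_lt_one {t : ℝ} (ht : 0 < t) : Real.exp (-t) < 1 := by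
  rw [Real.exp_lt_one_iff]; linarith

lemma one_sub_exp_pos {t : ℝ} (ht : 0 < t) : 0 < 1 - Real.exp (-t) :=
  sub_pos.2 (exp_neg_lt_one ht)

lemma row_bound {t : ℝ} (ht : 0 < t) :
    ∫⁻ r in Ioi (0:ℝ), ENNReal.ofReal (Real.exp (-r) / (Real.exp (r + t) - 1) *
      (Real.sqrt (1 - Real.exp (-t)) / Real.sqrt (1 - Real.exp (-r))))
      ≤ ENNReal.ofReal Real.pi := by
  have ha : 0 < 1 - Real.exp (-t) := one_sub_exp_pos ht
  have hc : 0 < Real.exp (-t) := Real.exp_pos _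
  have hA : 0 ≤ Real.exp (-t) * Real.sqrt (1 - Real.exp (-t)) := by positivity
  have hAc : Real.exp (-t) * Real.sqrt (1 - Real.exp (-t))
      ≤ Real.sqrt ((1 - Real.exp (-t)) * Real.exp (-t)) := by
    rw [Real.sqrt_mul ha.le]
    have h2 : Real.exp (-t) ≤ Real.sqrt (Real.exp (-t)) := by
      nlinarith [Real.sq_sqrt hc.le, Real.sqrt_nonneg (Real.exp (-t)),
        Real.sqrt_le_one.mpr (exp_neg_lt_one ht).le]
    nlinarith [Real.sqrt_nonneg (1 - Real.exp (-t))]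
  refine le_trans (lintegral_mono_ae ?_)
    (schur_bound (1 - Real.exp (-t)) (Real.exp (-t)) _ ha hc hA hAc)
  rw [ae_restrict_iff' measurableSet_Ioi]
  filter_upwards with r hr
  simp only [mem_Ioi] at hr
  apply ENNReal.ofReal_le_ofReal
  have hq : Real.exp (-r) * Real.exp (-t) < 1 := by
    rw [← Real.exp_add, show -r + -t = -(r+t) by ring]
    exact exp_neg_lt_one (by linarith)
  have hsr : 0 < Real.sqrt (1 - Real.exp (-r)) := Real.sqrt_pos.2 (one_sub_exp_pos hr)
  have hE : 0 < Real.exp (r + t) := Real.exp_pos _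
  have hE1 : Real.exp (r + t) - 1 = (1 - Real.exp (-r) * Real.exp (-t)) * Real.exp (r + t) := by
    have h1 : Real.exp (-r) * Real.exp (-t) * Real.exp (r + t) = 1 := by
      rw [← Real.exp_add, ← Real.exp_add, show -r + -t + (r+t) = 0 by ring, Real.exp_zero]
    nlinarith [h1]
  have hacr : 1 - Real.exp (-t) + Real.exp (-t) * (1 - Real.exp (-r))
      = 1 - Real.exp (-r) * Real.exp (-t) := by ring
  rw [hE1, hacr]
  rw [div_mul_div_comm, mul_div_assoc']
  rw [div_le_div_iff₀ (mul_pos (mul_pos (sub_pos.2 hq) hE) hsr) (mul_pos (sub_pos.2 hq) hsr)]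
  have hcE : 1 ≤ Real.exp (-t) * Real.exp (r + t) := by
    rw [← Real.exp_add, show -t + (r+t) = r by ring]
    exact Real.one_le_exp hr.le
  nlinarith [mul_pos (mul_pos (Real.exp_pos (-r)) (Real.sqrt_pos.2 ha))
      (mul_pos (sub_pos.2 hq) hsr), hcE, Real.sqrt_nonneg (1 - Real.exp (-t)),
    (Real.exp_pos (-r)).le, hsr.le, (sub_pos.2 hq).le]

lemma col_bound {r : ℝ} (hr : 0 < r) :
    ∫⁻ t in Ioi (0:ℝ), ENNReal.ofReal (Real.exp (-r) / (Real.exp (r + t) - 1) *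
      (Real.sqrt (1 - Real.exp (-r)) / Real.sqrt (1 - Real.exp (-t))))
      ≤ ENNReal.ofReal Real.pi := by
  have ha : 0 < 1 - Real.exp (-r) := one_sub_exp_pos hr
  have hc : 0 < Real.exp (-r) := Real.exp_pos _
  have hA : 0 ≤ Real.exp (-r) * Real.exp (-r) * Real.sqrt (1 - Real.exp (-r)) := by positivity
  have hAc : Real.exp (-r) * Real.exp (-r) * Real.sqrt (1 - Real.exp (-r))
      ≤ Real.sqrt ((1 - Real.exp (-r)) * Real.exp (-r)) := by
    rw [Real.sqrt_mul ha.le]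
    have h2 : Real.exp (-r) ≤ Real.sqrt (Real.exp (-r)) := by
      nlinarith [Real.sq_sqrt hc.le, Real.sqrt_nonneg (Real.exp (-r)),
        Real.sqrt_le_one.mpr (exp_neg_lt_one hr).le]
    have h3 : Real.exp (-r) ≤ 1 := (exp_neg_lt_one hr).le
    nlinarith [mul_nonneg (Real.sqrt_nonneg (1 - Real.exp (-r))) (sub_nonneg.2 h2),
      mul_nonneg (mul_nonneg (Real.sqrt_nonneg (1 - Real.exp (-r))) hc.le) (sub_nonneg.2 h3)]
  refine le_trans (lintegral_mono_ae ?_)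
    (schur_bound (1 - Real.exp (-r)) (Real.exp (-r)) _ ha hc hA hAc)
  rw [ae_restrict_iff' measurableSet_Ioi]
  filter_upwards with t ht
  simp only [mem_Ioi] at ht
  apply ENNReal.ofReal_le_ofReal
  have hq : Real.exp (-t) * Real.exp (-r) < 1 := by
    rw [← Real.exp_add, show -t + -r = -(r+t) by ring]
    exact exp_neg_lt_one (by linarith)
  have hst : 0 < Real.sqrt (1 - Real.exp (-t)) := Real.sqrt_pos.2 (one_sub_exp_pos ht)
  have hE : 0 < Real.exp (r + t) := Real.exp_pos _
  have hE1 : Real.exp (r + t) - 1 = (1 - Real.exp (-t) * Real.exp (-r)) * Real.exp (r + t) := by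
    have h1 : Real.exp (-t) * Real.exp (-r) * Real.exp (r + t) = 1 := by
      rw [← Real.exp_add, ← Real.exp_add, show -t + -r + (r+t) = 0 by ring, Real.exp_zero]
    nlinarith [h1]
  have hacr : 1 - Real.exp (-r) + Real.exp (-r) * (1 - Real.exp (-t))
      = 1 - Real.exp (-t) * Real.exp (-r) := by ring
  rw [hE1, hacr]
  rw [div_mul_div_comm, mul_div_assoc']
  rw [div_le_div_iff₀ (mul_pos (mul_pos (sub_pos.2 hq) hE) hst) (mul_pos (sub_pos.2 hq) hst)]
  have hXE : Real.exp (-r) * Real.exp (-r) * (Real.exp (-t) * Real.exp (r + t)) = Real.exp (-r) := by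
    rw [← Real.exp_add, ← Real.exp_add, ← Real.exp_add, show -r + -r + (-t + (r+t)) = -r by ring]
  nlinarith [hXE, mul_pos (mul_pos (Real.exp_pos (-r)) (Real.sqrt_pos.2 ha))
      (mul_pos (sub_pos.2 hq) hst), Real.sqrt_nonneg (1 - Real.exp (-r)),
    (Real.exp_pos (-t)).le, hst.le, (sub_pos.2 hq).le]

lemma Fnn {t r : ℝ} (ht : 0 < t) (hr : 0 < r) :
    0 ≤ Real.exp (-r) / (Real.exp (r + t) - 1) := by
  have h1 : (1:ℝ) < Real.exp (r + t) := Real.one_lt_exp_iff.2 (by linarith)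
  exact div_nonneg (Real.exp_pos _).le (by linarith)

lemma split_kernel {t r : ℝ} (ht : 0 < t) (hr : 0 < r) :
    ENNReal.ofReal (Real.exp (-r) / (Real.exp (r + t) - 1)) =
    (ENNReal.ofReal (Real.exp (-r) / (Real.exp (r + t) - 1) *
      (Real.sqrt (1 - Real.exp (-t)) / Real.sqrt (1 - Real.exp (-r))))) ^ (1/2:ℝ) *
    (ENNReal.ofReal (Real.exp (-r) / (Real.exp (r + t) - 1) *
      (Real.sqrt (1 - Real.exp (-r)) / Real.sqrt (1 - Real.exp (-t))))) ^ (1/2:ℝ) := by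
  have hF := Fnn ht hr
  have hst : 0 < Real.sqrt (1 - Real.exp (-t)) := by
    apply Real.sqrt_pos.2
    have : Real.exp (-t) < 1 := Real.exp_lt_one_iff.2 (by linarith)
    linarith
  have hsr : 0 < Real.sqrt (1 - Real.exp (-r)) := by
    apply Real.sqrt_pos.2
    have : Real.exp (-r) < 1 := Real.exp_lt_one_iff.2 (by linarith)
    linarith
  rw [ENNReal.ofReal_rpow_of_nonneg (by positivity) (by norm_num : (0:ℝ) ≤ 1/2),
      ENNReal.ofReal_rpow_of_nonneg (by positivity) (by norm_num : (0:ℝ) ≤ 1/2),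
      ← ENNReal.ofReal_mul (by positivity)]
  congr 1
  rw [← Real.mul_rpow (by positivity) (by positivity)]
  have hmul : Real.exp (-r) / (Real.exp (r + t) - 1) *
      (Real.sqrt (1 - Real.exp (-t)) / Real.sqrt (1 - Real.exp (-r))) *
      (Real.exp (-r) / (Real.exp (r + t) - 1) *
      (Real.sqrt (1 - Real.exp (-r)) / Real.sqrt (1 - Real.exp (-t))))
      = (Real.exp (-r) / (Real.exp (r + t) - 1)) ^ (2:ℕ) := by
    have hE1 : (1:ℝ) < Real.exp (r + t) := Real.one_lt_exp_iff.2 (by linarith)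
    have hE : Real.exp (r + t) - 1 ≠ 0 := by linarith
    field_simp
  rw [hmul, ← Real.rpow_natCast (Real.exp (-r) / (Real.exp (r + t) - 1)) 2,
    ← Real.rpow_mul hF]
  norm_num

/-- The operator (Af)(t) = ((1-ε)/π) ∫₀^∞ e^{-r}/(e^{r+t}-1) f(r) dr is bounded
on L²(ℝ₊) with norm at most 1-ε. -/
theorem contraction_A (ε : ℝ) (hε0 : 0 < ε) (hε1 : ε < 1) (f : ℝ → ℝ)
    (hf : MemLp f 2 (volume.restrict (Ioi 0))) :
    eLpNorm (fun t => ((1 - ε) / Real.pi) *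
        ∫ r in Ioi (0:ℝ), Real.exp (-r) / (Real.exp (r + t) - 1) * f r) 2
        (volume.restrict (Ioi 0))
      ≤ ENNReal.ofReal (1 - ε) * eLpNorm f 2 (volume.restrict (Ioi 0)) := by
  have hπ : 0 < Real.pi := Real.pi_pos
  have hε : (0:ℝ) ≤ 1 - ε := by linarith
  have hc0 : (0:ℝ) ≤ (1 - ε) / Real.pi := div_nonneg hε hπ.le
  obtain ⟨g, hgsm, hfg⟩ := hf.1
  have hgm : Measurable g := hgsm.measurable
  -- measurability helpers
  have m1 : ∀ t : ℝ, Measurable fun r : ℝ => Real.exp (-r) / (Real.exp (r + t) - 1) :=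
    fun t => (Real.measurable_exp.comp measurable_neg).div
      ((Real.measurable_exp.comp (measurable_id.add_const t)).sub measurable_const)
  have msqrt : Measurable fun x : ℝ => Real.sqrt (1 - Real.exp (-x)) :=
    Real.continuous_sqrt.measurable.comp
      (measurable_const.sub (Real.measurable_exp.comp measurable_neg))
  have mP : ∀ t : ℝ, Measurable fun r : ℝ =>
      ENNReal.ofReal (Real.exp (-r) / (Real.exp (r + t) - 1) *
        (Real.sqrt (1 - Real.exp (-t)) / Real.sqrt (1 - Real.exp (-r)))) :=
    fun t => ((m1 t).mul (measurable_const.div msqrt)).ennreal_ofReal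
  have mQ : ∀ t : ℝ, Measurable fun r : ℝ =>
      ENNReal.ofReal (Real.exp (-r) / (Real.exp (r + t) - 1) *
        (Real.sqrt (1 - Real.exp (-r)) / Real.sqrt (1 - Real.exp (-t)))) :=
    fun t => ((m1 t).mul (msqrt.div measurable_const)).ennreal_ofReal
  have mjoint : Measurable fun p : ℝ × ℝ =>
      ENNReal.ofReal (Real.exp (-p.2) / (Real.exp (p.2 + p.1) - 1) *
        (Real.sqrt (1 - Real.exp (-p.2)) / Real.sqrt (1 - Real.exp (-p.1))))
        * (‖g p.2‖₊ : ℝ≥0∞) ^ (2:ℝ) := by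
    refine Measurable.mul ?_ ?_
    · refine Measurable.ennreal_ofReal (Measurable.mul ?_ ?_)
      · exact (Real.measurable_exp.comp measurable_snd.neg).div
          ((Real.measurable_exp.comp (measurable_snd.add measurable_fst)).sub measurable_const)
      · exact (msqrt.comp measurable_snd).div (msqrt.comp measurable_fst)
    · exact ((hgm.comp measurable_snd).nnnorm.coe_nnreal_ennreal).pow_const (2:ℝ)
  -- pointwise key bound
  have key : ∀ t ∈ Ioi (0:ℝ),
      (‖((1 - ε) / Real.pi) *
          ∫ r in Ioi (0:ℝ), Real.exp (-r) / (Real.exp (r + t) - 1) * f r‖₊ : ℝ≥0∞) ^ (2:ℝ)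
      ≤ (ENNReal.ofReal ((1 - ε) / Real.pi)) ^ (2:ℝ) * ENNReal.ofReal Real.pi *
        ∫⁻ r in Ioi (0:ℝ), ENNReal.ofReal (Real.exp (-r) / (Real.exp (r + t) - 1) *
          (Real.sqrt (1 - Real.exp (-r)) / Real.sqrt (1 - Real.exp (-t))))
          * (‖g r‖₊ : ℝ≥0∞) ^ (2:ℝ) := by
    intro t ht
    simp only [mem_Ioi] at ht
    have hinteq : (∫ r in Ioi (0:ℝ), Real.exp (-r) / (Real.exp (r + t) - 1) * f r)
        = ∫ r in Ioi (0:ℝ), Real.exp (-r) / (Real.exp (r + t) - 1) * g r :=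
      integral_congr_ae (hfg.mono fun r hr => by dsimp only; rw [hr])
    have hA1 : (‖((1 - ε) / Real.pi) *
          ∫ r in Ioi (0:ℝ), Real.exp (-r) / (Real.exp (r + t) - 1) * f r‖₊ : ℝ≥0∞)
        ≤ ENNReal.ofReal ((1 - ε) / Real.pi) *
          ∫⁻ r in Ioi (0:ℝ), ENNReal.ofReal (Real.exp (-r) / (Real.exp (r + t) - 1))
            * (‖g r‖₊ : ℝ≥0∞) := by
      rw [hinteq, nnnorm_mul, ENNReal.coe_mul, ← enorm_eq_nnnorm, Real.enorm_eq_ofReal hc0]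
      apply mul_le_mul_right
      refine (enorm_integral_le_lintegral_enorm _).trans (le_of_eq ?_)
      apply lintegral_congr_ae
      refine (ae_restrict_iff' measurableSet_Ioi).2 (ae_of_all _ fun r hr => ?_)
      dsimp only
      rw [enorm_mul, Real.enorm_eq_ofReal (Fnn ht hr), enorm_eq_nnnorm]
    have hCS : (∫⁻ r in Ioi (0:ℝ), ENNReal.ofReal (Real.exp (-r) / (Real.exp (r + t) - 1))
            * (‖g r‖₊ : ℝ≥0∞))
        ≤ (∫⁻ r in Ioi (0:ℝ), ENNReal.ofReal (Real.exp (-r) / (Real.exp (r + t) - 1) *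
            (Real.sqrt (1 - Real.exp (-t)) / Real.sqrt (1 - Real.exp (-r))))) ^ (1/2:ℝ) *
          (∫⁻ r in Ioi (0:ℝ), ENNReal.ofReal (Real.exp (-r) / (Real.exp (r + t) - 1) *
            (Real.sqrt (1 - Real.exp (-r)) / Real.sqrt (1 - Real.exp (-t))))
            * (‖g r‖₊ : ℝ≥0∞) ^ (2:ℝ)) ^ (1/2:ℝ) := by
      have hrw : (∫⁻ r in Ioi (0:ℝ), ENNReal.ofReal (Real.exp (-r) / (Real.exp (r + t) - 1))
            * (‖g r‖₊ : ℝ≥0∞))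
          = ∫⁻ r in Ioi (0:ℝ),
            ((fun r => (ENNReal.ofReal (Real.exp (-r) / (Real.exp (r + t) - 1) *
              (Real.sqrt (1 - Real.exp (-t)) / Real.sqrt (1 - Real.exp (-r))))) ^ (1/2:ℝ)) *
             (fun r => (ENNReal.ofReal (Real.exp (-r) / (Real.exp (r + t) - 1) *
              (Real.sqrt (1 - Real.exp (-r)) / Real.sqrt (1 - Real.exp (-t))))) ^ (1/2:ℝ)
              * (‖g r‖₊ : ℝ≥0∞))) r := by
        apply lintegral_congr_ae
        refine (ae_restrict_iff' measurableSet_Ioi).2 (ae_of_all _ fun r hr => ?_)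
        dsimp only [Pi.mul_apply]
        rw [split_kernel ht hr, mul_assoc]
      rw [hrw]
      have conj : Real.HolderConjugate 2 2 := Real.HolderConjugate.two_two
      refine (ENNReal.lintegral_mul_le_Lp_mul_Lq _ conj ?_ ?_).trans (le_of_eq ?_)
      · exact ((mP t).pow_const _).aemeasurable
      · exact (((mQ t).pow_const _).mul
          (hgm.nnnorm.coe_nnreal_ennreal)).aemeasurable
      · congr 1
        · congr 1
          apply lintegral_congr fun r => ?_
          rw [← ENNReal.rpow_mul]
          norm_num
        · congr 1
          apply lintegral_congr fun r => ?_
          rw [ENNReal.mul_rpow_of_nonneg _ _ (by norm_num : (0:ℝ) ≤ 2),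
            ← ENNReal.rpow_mul]
          norm_num
    calc (‖((1 - ε) / Real.pi) *
          ∫ r in Ioi (0:ℝ), Real.exp (-r) / (Real.exp (r + t) - 1) * f r‖₊ : ℝ≥0∞) ^ (2:ℝ)
        ≤ (ENNReal.ofReal ((1 - ε) / Real.pi) *
            ((∫⁻ r in Ioi (0:ℝ), ENNReal.ofReal (Real.exp (-r) / (Real.exp (r + t) - 1) *
              (Real.sqrt (1 - Real.exp (-t)) / Real.sqrt (1 - Real.exp (-r))))) ^ (1/2:ℝ) *
            (∫⁻ r in Ioi (0:ℝ), ENNReal.ofReal (Real.exp (-r) / (Real.exp (r + t) - 1) *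
              (Real.sqrt (1 - Real.exp (-r)) / Real.sqrt (1 - Real.exp (-t))))
              * (‖g r‖₊ : ℝ≥0∞) ^ (2:ℝ)) ^ (1/2:ℝ))) ^ (2:ℝ) :=
          ENNReal.rpow_le_rpow (hA1.trans (mul_le_mul_right hCS _)) (by norm_num)
      _ = (ENNReal.ofReal ((1 - ε) / Real.pi)) ^ (2:ℝ) *
            ((∫⁻ r in Ioi (0:ℝ), ENNReal.ofReal (Real.exp (-r) / (Real.exp (r + t) - 1) *
              (Real.sqrt (1 - Real.exp (-t)) / Real.sqrt (1 - Real.exp (-r))))) *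
            (∫⁻ r in Ioi (0:ℝ), ENNReal.ofReal (Real.exp (-r) / (Real.exp (r + t) - 1) *
              (Real.sqrt (1 - Real.exp (-r)) / Real.sqrt (1 - Real.exp (-t))))
              * (‖g r‖₊ : ℝ≥0∞) ^ (2:ℝ))) := by
          rw [ENNReal.mul_rpow_of_nonneg _ _ (by norm_num : (0:ℝ) ≤ 2),
            ENNReal.mul_rpow_of_nonneg _ _ (by norm_num : (0:ℝ) ≤ 2),
            ← ENNReal.rpow_mul, ← ENNReal.rpow_mul]
          norm_num
      _ ≤ (ENNReal.ofReal ((1 - ε) / Real.pi)) ^ (2:ℝ) *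
            (ENNReal.ofReal Real.pi *
            (∫⁻ r in Ioi (0:ℝ), ENNReal.ofReal (Real.exp (-r) / (Real.exp (r + t) - 1) *
              (Real.sqrt (1 - Real.exp (-r)) / Real.sqrt (1 - Real.exp (-t))))
              * (‖g r‖₊ : ℝ≥0∞) ^ (2:ℝ))) :=
          mul_le_mul_right (mul_le_mul_left (row_bound ht) _) _
      _ = (ENNReal.ofReal ((1 - ε) / Real.pi)) ^ (2:ℝ) * ENNReal.ofReal Real.pi *
            ∫⁻ r in Ioi (0:ℝ), ENNReal.ofReal (Real.exp (-r) / (Real.exp (r + t) - 1) *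
              (Real.sqrt (1 - Real.exp (-r)) / Real.sqrt (1 - Real.exp (-t))))
              * (‖g r‖₊ : ℝ≥0∞) ^ (2:ℝ) := by rw [mul_assoc]
  have mQt : ∀ r : ℝ, Measurable fun t : ℝ =>
      ENNReal.ofReal (Real.exp (-r) / (Real.exp (r + t) - 1) *
        (Real.sqrt (1 - Real.exp (-r)) / Real.sqrt (1 - Real.exp (-t)))) :=
    fun r => ((measurable_const.div
        ((Real.measurable_exp.comp (measurable_id.const_add r)).sub measurable_const)).mul
      (measurable_const.div msqrt)).ennreal_ofReal
  have main : (∫⁻ t in Ioi (0:ℝ),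
      (‖((1 - ε) / Real.pi) *
        ∫ r in Ioi (0:ℝ), Real.exp (-r) / (Real.exp (r + t) - 1) * f r‖₊ : ℝ≥0∞) ^ (2:ℝ))
      ≤ ENNReal.ofReal ((1 - ε)^2) * ∫⁻ r in Ioi (0:ℝ), (‖f r‖₊ : ℝ≥0∞) ^ (2:ℝ) := by
    calc (∫⁻ t in Ioi (0:ℝ),
        (‖((1 - ε) / Real.pi) *
          ∫ r in Ioi (0:ℝ), Real.exp (-r) / (Real.exp (r + t) - 1) * f r‖₊ : ℝ≥0∞) ^ (2:ℝ))
        ≤ ∫⁻ t in Ioi (0:ℝ), (ENNReal.ofReal ((1 - ε) / Real.pi)) ^ (2:ℝ) *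
            ENNReal.ofReal Real.pi *
            ∫⁻ r in Ioi (0:ℝ), ENNReal.ofReal (Real.exp (-r) / (Real.exp (r + t) - 1) *
              (Real.sqrt (1 - Real.exp (-r)) / Real.sqrt (1 - Real.exp (-t))))
              * (‖g r‖₊ : ℝ≥0∞) ^ (2:ℝ) :=
          lintegral_mono_ae ((ae_restrict_iff' measurableSet_Ioi).2 (ae_of_all _ key))
      _ = (ENNReal.ofReal ((1 - ε) / Real.pi)) ^ (2:ℝ) * ENNReal.ofReal Real.pi *
            ∫⁻ t in Ioi (0:ℝ), ∫⁻ r in Ioi (0:ℝ),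
              ENNReal.ofReal (Real.exp (-r) / (Real.exp (r + t) - 1) *
              (Real.sqrt (1 - Real.exp (-r)) / Real.sqrt (1 - Real.exp (-t))))
              * (‖g r‖₊ : ℝ≥0∞) ^ (2:ℝ) :=
          lintegral_const_mul'' _ (mjoint.lintegral_prod_right').aemeasurable
      _ = (ENNReal.ofReal ((1 - ε) / Real.pi)) ^ (2:ℝ) * ENNReal.ofReal Real.pi *
            ∫⁻ r in Ioi (0:ℝ), ∫⁻ t in Ioi (0:ℝ),
              ENNReal.ofReal (Real.exp (-r) / (Real.exp (r + t) - 1) *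
              (Real.sqrt (1 - Real.exp (-r)) / Real.sqrt (1 - Real.exp (-t))))
              * (‖g r‖₊ : ℝ≥0∞) ^ (2:ℝ) := by
          rw [lintegral_lintegral_swap mjoint.aemeasurable]
      _ = (ENNReal.ofReal ((1 - ε) / Real.pi)) ^ (2:ℝ) * ENNReal.ofReal Real.pi *
            ∫⁻ r in Ioi (0:ℝ), (∫⁻ t in Ioi (0:ℝ),
              ENNReal.ofReal (Real.exp (-r) / (Real.exp (r + t) - 1) *
              (Real.sqrt (1 - Real.exp (-r)) / Real.sqrt (1 - Real.exp (-t)))))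
              * (‖g r‖₊ : ℝ≥0∞) ^ (2:ℝ) := by
          congr 1
          exact lintegral_congr fun r => lintegral_mul_const'' _ (mQt r).aemeasurable
      _ ≤ (ENNReal.ofReal ((1 - ε) / Real.pi)) ^ (2:ℝ) * ENNReal.ofReal Real.pi *
            ∫⁻ r in Ioi (0:ℝ), ENNReal.ofReal Real.pi * (‖g r‖₊ : ℝ≥0∞) ^ (2:ℝ) := by
          apply mul_le_mul_right
          exact lintegral_mono_ae ((ae_restrict_iff' measurableSet_Ioi).2
            (ae_of_all _ fun r hr => mul_le_mul_left (col_bound hr) _))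
      _ = (ENNReal.ofReal ((1 - ε) / Real.pi)) ^ (2:ℝ) * ENNReal.ofReal Real.pi *
            (ENNReal.ofReal Real.pi * ∫⁻ r in Ioi (0:ℝ), (‖g r‖₊ : ℝ≥0∞) ^ (2:ℝ)) := by
          rw [lintegral_const_mul'' _ ((hgm.nnnorm.coe_nnreal_ennreal).pow_const (2:ℝ)).aemeasurable]
      _ = ENNReal.ofReal ((1 - ε)^2) * ∫⁻ r in Ioi (0:ℝ), (‖g r‖₊ : ℝ≥0∞) ^ (2:ℝ) := by
          rw [← mul_assoc]
          congr 1
          rw [ENNReal.ofReal_rpow_of_nonneg hc0 (by norm_num : (0:ℝ) ≤ 2),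
            ← ENNReal.ofReal_mul (by positivity), ← ENNReal.ofReal_mul (by positivity)]
          congr 1
          rw [show (2:ℝ) = ((2:ℕ):ℝ) by norm_num, Real.rpow_natCast]
          field_simp
      _ = ENNReal.ofReal ((1 - ε)^2) * ∫⁻ r in Ioi (0:ℝ), (‖f r‖₊ : ℝ≥0∞) ^ (2:ℝ) := by
          congr 1
          apply lintegral_congr_ae
          exact hfg.mono fun r hr => by dsimp only; rw [hr]
  rw [eLpNorm_eq_lintegral_rpow_enorm_toReal (by norm_num : (2:ℝ≥0∞) ≠ 0) (by norm_num : (2:ℝ≥0∞) ≠ ⊤),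
    eLpNorm_eq_lintegral_rpow_enorm_toReal (by norm_num : (2:ℝ≥0∞) ≠ 0) (by norm_num : (2:ℝ≥0∞) ≠ ⊤)]
  simp only [ENNReal.toReal_ofNat]
  calc (∫⁻ t in Ioi (0:ℝ),
        (‖((1 - ε) / Real.pi) *
          ∫ r in Ioi (0:ℝ), Real.exp (-r) / (Real.exp (r + t) - 1) * f r‖₊ : ℝ≥0∞) ^ (2:ℝ))
          ^ (1/(2:ℝ))
      ≤ (ENNReal.ofReal ((1 - ε)^2) * ∫⁻ r in Ioi (0:ℝ), (‖f r‖₊ : ℝ≥0∞) ^ (2:ℝ)) ^ (1/(2:ℝ)) :=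
        ENNReal.rpow_le_rpow main (by norm_num)
    _ = ENNReal.ofReal (1 - ε) * (∫⁻ r in Ioi (0:ℝ), (‖f r‖₊ : ℝ≥0∞) ^ (2:ℝ)) ^ (1/(2:ℝ)) := by
        rw [ENNReal.mul_rpow_of_nonneg _ _ (by norm_num : (0:ℝ) ≤ 1/2)]
        congr 1
        rw [ENNReal.ofReal_rpow_of_nonneg (by positivity) (by norm_num : (0:ℝ) ≤ 1/2)]
        congr 1
        rw [← Real.rpow_natCast (1 - ε) 2, ← Real.rpow_mul hε]
        norm_num
end

section
/- Let A_n be the integral operator (A_n f)(t) = (sin(πd)/π) ∫₀^∞ h(r) e^{-nr}/(e^{r+t}-1) f(r) dr, where h : ℝ₊ → ℝ is continuous with h(0⁺) = 1 and sup_{r≥0} |h(r)e^{-n₀ r}| < 1 + δ where δ = (1/2)|sin(πd)|^{-1} - 1/2. Then for all n ≥ n₀, ‖A_n f‖_{L²} ≤ (1-ε)‖f‖_{L²} with ε = 1/2 - |sin(πd)|/2, for all f ∈ L²(ℝ₊). -/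
open MeasureTheory Set Real
open scoped ENNReal

lemma schurIntegralOne :
    ∫ s in Ioi (0:ℝ), s ^ (-(1/2) : ℝ) * (1 + s)⁻¹ = π := by
  have h2 : (2:ℝ) ≠ 0 := two_ne_zero
  have key := integral_comp_rpow_Ioi (fun s : ℝ => s ^ (-(1/2) : ℝ) * (1 + s)⁻¹) h2
  rw [← key]
  have : ∀ x ∈ Ioi (0:ℝ),
      (|(2:ℝ)| * x ^ ((2:ℝ) - 1)) • ((x ^ (2:ℝ)) ^ (-(1/2) : ℝ) * (1 + x ^ (2:ℝ))⁻¹)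
        = 2 * (1 + x ^ 2)⁻¹ := by
    intro x hx
    have hx0 : (0:ℝ) < x := hx
    have h1 : (x ^ (2:ℝ)) ^ (-(1/2) : ℝ) = x⁻¹ := by
      rw [← Real.rpow_mul hx0.le]
      norm_num
      exact Real.rpow_neg_one x
    have h2' : x ^ (2:ℝ) = x ^ 2 := by
      rw [show (2:ℝ) = ((2:ℕ):ℝ) by norm_num, Real.rpow_natCast]
    rw [h1, h2']
    simp only [smul_eq_mul]
    rw [abs_two]
    have h3 : x ^ ((2:ℝ)-1) = x := by norm_num
    rw [h3]
    field_simp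
  rw [setIntegral_congr_fun measurableSet_Ioi this, MeasureTheory.integral_const_mul,
    integral_Ioi_inv_one_add_sq]
  simp [Real.arctan_zero]
  ring

lemma schurMeasAux {t : ℝ} : Measurable (fun r : ℝ => r ^ (-(1/2) : ℝ) * (t + r)⁻¹) :=
  (measurable_id.pow_const _).mul (measurable_const.add measurable_id).inv

lemma schurIntegrable {t : ℝ} (ht : 0 < t) :
    IntegrableOn (fun r : ℝ => r ^ (-(1/2) : ℝ) * (t + r)⁻¹) (Ioi 0) := by
  have hmeas := @schurMeasAux t
  rw [show Ioi (0:ℝ) = Ioc 0 1 ∪ Ioi 1 from (Ioc_union_Ioi_eq_Ioi zero_le_one).symm]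
  refine IntegrableOn.union ?_ ?_
  · have hbase : IntegrableOn (fun r : ℝ => r ^ (-(1/2) : ℝ) * t⁻¹) (Ioc (0:ℝ) 1) := by
      refine Integrable.mul_const ?_ _
      refine IntegrableOn.congr_set_ae ?_ Ioo_ae_eq_Ioc.symm
      exact (intervalIntegral.integrableOn_Ioo_rpow_iff zero_lt_one).mpr (by norm_num)
    refine Integrable.mono hbase hmeas.aestronglyMeasurable.restrict ?_
    refine (ae_restrict_iff' measurableSet_Ioc).mpr (Filter.Eventually.of_forall ?_)
    intro r hr
    have hr0 : 0 < r := hr.1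
    have h1 : (0:ℝ) < t + r := by linarith
    rw [norm_mul, norm_mul]
    refine mul_le_mul_of_nonneg_left ?_ (norm_nonneg _)
    rw [Real.norm_eq_abs, Real.norm_eq_abs, abs_of_pos (inv_pos.mpr h1),
      abs_of_pos (inv_pos.mpr ht)]
    exact inv_anti₀ ht (by linarith)
  · have hbase : IntegrableOn (fun r : ℝ => r ^ (-(3/2) : ℝ)) (Ioi (1:ℝ)) :=
      integrableOn_Ioi_rpow_of_lt (by norm_num) zero_lt_one
    refine Integrable.mono hbase hmeas.aestronglyMeasurable.restrict ?_
    refine (ae_restrict_iff' measurableSet_Ioi).mpr (Filter.Eventually.of_forall ?_)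
    intro r hr
    have hr1 : (1:ℝ) < r := hr
    have hr0 : (0:ℝ) < r := by linarith
    have h1 : (0:ℝ) < t + r := by linarith
    rw [norm_mul, Real.norm_eq_abs, Real.norm_eq_abs, Real.norm_eq_abs,
      abs_of_pos (inv_pos.mpr h1), abs_of_pos (Real.rpow_pos_of_pos hr0 _),
      abs_of_pos (Real.rpow_pos_of_pos hr0 _)]
    have : r ^ (-(3/2) : ℝ) = r ^ (-(1/2) : ℝ) * r⁻¹ := by
      rw [← Real.rpow_neg_one r, ← Real.rpow_add hr0]; norm_num
    rw [this]
    refine mul_le_mul_of_nonneg_left ?_ (Real.rpow_pos_of_pos hr0 _).le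
    exact inv_anti₀ hr0 (by linarith)


lemma schurIntegralVal {t : ℝ} (ht : 0 < t) :
    ∫ r in Ioi (0:ℝ), r ^ (-(1/2) : ℝ) * (t + r)⁻¹ = π * t ^ (-(1/2) : ℝ) := by
  have key := integral_comp_mul_left_Ioi
    (fun r : ℝ => r ^ (-(1/2) : ℝ) * (t + r)⁻¹) 0 ht
  simp only [mul_zero, smul_eq_mul] at key
  have congr1 : ∀ x ∈ Ioi (0:ℝ),
      (t * x) ^ (-(1/2) : ℝ) * (t + t * x)⁻¹
        = (t ^ (-(1/2) : ℝ) * t⁻¹) * (x ^ (-(1/2) : ℝ) * (1 + x)⁻¹) := by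
    intro x hx
    have hx0 : (0:ℝ) < x := hx
    rw [Real.mul_rpow ht.le hx0.le, show t + t * x = t * (1 + x) by ring,
      mul_inv]
    ring
  rw [setIntegral_congr_fun measurableSet_Ioi congr1, MeasureTheory.integral_const_mul,
    schurIntegralOne] at key
  refine mul_left_cancel₀ (inv_ne_zero ht.ne') ?_
  rw [← key]
  ring

lemma schurLintegralVal {t : ℝ} (ht : 0 < t) :
    ∫⁻ r in Ioi (0:ℝ), (ENNReal.ofReal r) ^ (-(1/2) : ℝ) * (ENNReal.ofReal (t + r))⁻¹
      = ENNReal.ofReal π * (ENNReal.ofReal t) ^ (-(1/2) : ℝ) := by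
  have hcongr : ∀ᵐ r ∂(volume : Measure ℝ), r ∈ Ioi (0:ℝ) →
      (ENNReal.ofReal r) ^ (-(1/2) : ℝ) * (ENNReal.ofReal (t + r))⁻¹
        = ENNReal.ofReal (r ^ (-(1/2) : ℝ) * (t + r)⁻¹) := by
    refine Filter.Eventually.of_forall fun r hr => ?_
    have hr0 : (0:ℝ) < r := hr
    have h1 : (0:ℝ) < t + r := by linarith
    rw [ENNReal.ofReal_mul (Real.rpow_nonneg hr0.le _),
      ENNReal.ofReal_rpow_of_pos hr0, ENNReal.ofReal_inv_of_pos h1]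
  rw [setLIntegral_congr_fun_ae measurableSet_Ioi hcongr,
    ← ofReal_integral_eq_lintegral_ofReal (schurIntegrable ht) ?_,
    schurIntegralVal ht, ENNReal.ofReal_mul Real.pi_pos.le,
    ENNReal.ofReal_rpow_of_pos ht]
  refine (ae_restrict_iff' measurableSet_Ioi).mpr (Filter.Eventually.of_forall fun r hr => ?_)
  have hr0 : (0:ℝ) < r := hr
  positivity

lemma schurBound {g : ℝ → ℝ≥0∞} (hg : AEMeasurable g (volume.restrict (Ioi 0)))
    (hgfin : ∀ r, g r ≠ ⊤) :
    ∫⁻ t in Ioi (0:ℝ), (∫⁻ r in Ioi (0:ℝ), g r * (ENNReal.ofReal (t + r))⁻¹) ^ (2:ℝ)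
      ≤ ENNReal.ofReal π ^ (2:ℝ) * ∫⁻ r in Ioi (0:ℝ), g r ^ (2:ℝ) := by
  set V : ℝ → ℝ≥0∞ := fun t => ∫⁻ r in Ioi (0:ℝ),
    (ENNReal.ofReal (t + r))⁻¹ * ((ENNReal.ofReal r) ^ ((1/2):ℝ) * g r ^ (2:ℝ)) with hV
  set F : ℝ → ℝ → ℝ≥0∞ := fun t r => (ENNReal.ofReal t) ^ (-(1/2):ℝ) *
    ((ENNReal.ofReal (t + r))⁻¹ * ((ENNReal.ofReal r) ^ ((1/2):ℝ) * g r ^ (2:ℝ))) with hF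
  have hfin_t : ∀ t : ℝ, 0 < t → (ENNReal.ofReal t) ^ (-(1/2):ℝ) ≠ ⊤ := by
    intro t ht
    rw [show (-(1/2):ℝ) = -(1/2) from rfl, ENNReal.rpow_neg]
    exact ENNReal.inv_ne_top.mpr
      (ENNReal.rpow_pos (ENNReal.ofReal_pos.mpr ht) ENNReal.ofReal_ne_top).ne'
  -- Step 1 : pointwise Cauchy-Schwarz
  have step1 : ∀ t ∈ Ioi (0:ℝ),
      (∫⁻ r in Ioi (0:ℝ), g r * (ENNReal.ofReal (t + r))⁻¹) ^ (2:ℝ)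
        ≤ ENNReal.ofReal π * ((ENNReal.ofReal t) ^ (-(1/2):ℝ) * V t) := by
    intro t ht
    have ht0 : (0:ℝ) < t := ht
    set u : ℝ → ℝ≥0∞ := fun r =>
      (ENNReal.ofReal r) ^ (-(1/4):ℝ) * (ENNReal.ofReal (t + r)) ^ (-(1/2):ℝ) with hu
    set v : ℝ → ℝ≥0∞ := fun r =>
      (ENNReal.ofReal r) ^ ((1/4):ℝ) * ((ENNReal.ofReal (t + r)) ^ (-(1/2):ℝ) * g r) with hv
    have humeas : AEMeasurable u (volume.restrict (Ioi (0:ℝ))) :=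
      ((ENNReal.measurable_ofReal.pow_const _).mul
        ((ENNReal.measurable_ofReal.comp (measurable_const.add measurable_id)).pow_const _)).aemeasurable
    have hvmeas : AEMeasurable v (volume.restrict (Ioi (0:ℝ))) :=
      ((ENNReal.measurable_ofReal.pow_const _).aemeasurable.mul
        (((ENNReal.measurable_ofReal.comp (measurable_const.add measurable_id)).pow_const _).aemeasurable.mul hg))
    have e1 : ∀ᵐ r ∂(volume : Measure ℝ), r ∈ Ioi (0:ℝ) →
        g r * (ENNReal.ofReal (t + r))⁻¹ = (u * v) r := by
      refine Filter.Eventually.of_forall fun r hr => ?_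
      have hr0 : (0:ℝ) < r := hr
      have h0 : ENNReal.ofReal r ≠ 0 := (ENNReal.ofReal_pos.mpr hr0).ne'
      have hx0 : ENNReal.ofReal (t + r) ≠ 0 := (ENNReal.ofReal_pos.mpr (by linarith)).ne'
      simp only [hu, hv, Pi.mul_apply]
      rw [show (ENNReal.ofReal r) ^ (-(1/4):ℝ) * (ENNReal.ofReal (t + r)) ^ (-(1/2):ℝ) *
          ((ENNReal.ofReal r) ^ ((1/4):ℝ) * ((ENNReal.ofReal (t + r)) ^ (-(1/2):ℝ) * g r))
        = ((ENNReal.ofReal r) ^ (-(1/4):ℝ) * (ENNReal.ofReal r) ^ ((1/4):ℝ)) *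
          (((ENNReal.ofReal (t + r)) ^ (-(1/2):ℝ) * (ENNReal.ofReal (t + r)) ^ (-(1/2):ℝ)) * g r)
          by ring,
        ← ENNReal.rpow_add _ _ h0 ENNReal.ofReal_ne_top,
        ← ENNReal.rpow_add _ _ hx0 ENNReal.ofReal_ne_top]
      norm_num
      rw [ENNReal.rpow_neg_one]
      ring
    have e2 : ∀ᵐ r ∂(volume : Measure ℝ), r ∈ Ioi (0:ℝ) →
        u r ^ (2:ℝ) = (ENNReal.ofReal r) ^ (-(1/2):ℝ) * (ENNReal.ofReal (t + r))⁻¹ := by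
      refine Filter.Eventually.of_forall fun r hr => ?_
      simp only [hu]
      rw [ENNReal.mul_rpow_of_nonneg _ _ (by norm_num : (0:ℝ) ≤ 2),
        ← ENNReal.rpow_mul, ← ENNReal.rpow_mul]
      norm_num
      rw [ENNReal.rpow_neg_one]
    have e3 : ∀ᵐ r ∂(volume : Measure ℝ), r ∈ Ioi (0:ℝ) →
        v r ^ (2:ℝ) = (ENNReal.ofReal (t + r))⁻¹ *
          ((ENNReal.ofReal r) ^ ((1/2):ℝ) * g r ^ (2:ℝ)) := by
      refine Filter.Eventually.of_forall fun r hr => ?_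
      simp only [hv]
      rw [ENNReal.mul_rpow_of_nonneg _ _ (by norm_num : (0:ℝ) ≤ 2),
        ENNReal.mul_rpow_of_nonneg _ _ (by norm_num : (0:ℝ) ≤ 2),
        ← ENNReal.rpow_mul, ← ENNReal.rpow_mul]
      norm_num
      rw [ENNReal.rpow_neg_one]
      ring
    have hCS := ENNReal.lintegral_mul_le_Lp_mul_Lq (volume.restrict (Ioi (0:ℝ)))
      Real.HolderConjugate.two_two humeas hvmeas
    rw [setLIntegral_congr_fun_ae measurableSet_Ioi e1]
    have hU : ∫⁻ r in Ioi (0:ℝ), u r ^ (2:ℝ)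
        = ENNReal.ofReal π * (ENNReal.ofReal t) ^ (-(1/2):ℝ) := by
      rw [setLIntegral_congr_fun_ae measurableSet_Ioi e2]
      exact schurLintegralVal ht0
    have hVt : ∫⁻ r in Ioi (0:ℝ), v r ^ (2:ℝ) = V t :=
      setLIntegral_congr_fun_ae measurableSet_Ioi e3
    calc (∫⁻ r in Ioi (0:ℝ), (u * v) r) ^ (2:ℝ)
        ≤ ((∫⁻ r in Ioi (0:ℝ), u r ^ (2:ℝ)) ^ ((1:ℝ)/2) *
           (∫⁻ r in Ioi (0:ℝ), v r ^ (2:ℝ)) ^ ((1:ℝ)/2)) ^ (2:ℝ) :=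
          ENNReal.rpow_le_rpow hCS (by norm_num)
      _ = (∫⁻ r in Ioi (0:ℝ), u r ^ (2:ℝ)) * (∫⁻ r in Ioi (0:ℝ), v r ^ (2:ℝ)) := by
          rw [ENNReal.mul_rpow_of_nonneg _ _ (by norm_num : (0:ℝ) ≤ 2),
            ← ENNReal.rpow_mul, ← ENNReal.rpow_mul]
          norm_num
      _ = ENNReal.ofReal π * ((ENNReal.ofReal t) ^ (-(1/2):ℝ) * V t) := by
          rw [hU, hVt, mul_assoc]
  -- Step 2
  have step2 : ∫⁻ t in Ioi (0:ℝ),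
        (∫⁻ r in Ioi (0:ℝ), g r * (ENNReal.ofReal (t + r))⁻¹) ^ (2:ℝ)
      ≤ ENNReal.ofReal π *
        ∫⁻ t in Ioi (0:ℝ), (ENNReal.ofReal t) ^ (-(1/2):ℝ) * V t := by
    rw [← lintegral_const_mul' _ _ ENNReal.ofReal_ne_top]
    exact lintegral_mono_ae ((ae_restrict_iff' measurableSet_Ioi).mpr
      (Filter.Eventually.of_forall step1))
  -- Step 3 : Tonelli and the key integral again
  have hFmeas : AEMeasurable (Function.uncurry F)
      ((volume.restrict (Ioi (0:ℝ))).prod (volume.restrict (Ioi (0:ℝ)))) := by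
    refine AEMeasurable.mul ?_ (AEMeasurable.mul ?_ (AEMeasurable.mul ?_ ?_))
    · exact ((ENNReal.measurable_ofReal.comp measurable_fst).pow_const _).aemeasurable
    · exact ((ENNReal.measurable_ofReal.comp (measurable_fst.add measurable_snd)).inv).aemeasurable
    · exact ((ENNReal.measurable_ofReal.comp measurable_snd).pow_const _).aemeasurable
    · exact hg.comp_snd.pow_const _
  have unfold_t : ∀ᵐ t ∂(volume : Measure ℝ), t ∈ Ioi (0:ℝ) →
      (ENNReal.ofReal t) ^ (-(1/2):ℝ) * V t = ∫⁻ r in Ioi (0:ℝ), F t r := by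
    refine Filter.Eventually.of_forall fun t ht => ?_
    exact (lintegral_const_mul' _ _ (hfin_t t ht)).symm
  have key_r : ∀ᵐ r ∂(volume : Measure ℝ), r ∈ Ioi (0:ℝ) →
      (∫⁻ t in Ioi (0:ℝ), F t r) = ENNReal.ofReal π * g r ^ (2:ℝ) := by
    refine Filter.Eventually.of_forall fun r hr => ?_
    have hr0 : (0:ℝ) < r := hr
    set K : ℝ≥0∞ := (ENNReal.ofReal r) ^ ((1/2):ℝ) * g r ^ (2:ℝ) with hK
    have hKfin : K ≠ ⊤ := by
      refine ENNReal.mul_ne_top ?_ ?_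
      · exact ENNReal.rpow_ne_top_of_nonneg (by norm_num) ENNReal.ofReal_ne_top
      · exact ENNReal.rpow_ne_top_of_nonneg (by norm_num) (hgfin r)
    have hcongr : ∀ᵐ t ∂(volume : Measure ℝ), t ∈ Ioi (0:ℝ) →
        F t r = K * ((ENNReal.ofReal t) ^ (-(1/2):ℝ) * (ENNReal.ofReal (r + t))⁻¹) := by
      refine Filter.Eventually.of_forall fun t ht => ?_
      simp only [hF, hK, add_comm t r]
      ring
    rw [setLIntegral_congr_fun_ae measurableSet_Ioi hcongr,
      lintegral_const_mul' _ _ hKfin, schurLintegralVal hr0, hK]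
    rw [show (ENNReal.ofReal r) ^ ((1/2):ℝ) * g r ^ (2:ℝ) *
        (ENNReal.ofReal π * (ENNReal.ofReal r) ^ (-(1/2):ℝ))
      = ((ENNReal.ofReal r) ^ ((1/2):ℝ) * (ENNReal.ofReal r) ^ (-(1/2):ℝ)) *
        (ENNReal.ofReal π * g r ^ (2:ℝ)) by ring,
      ← ENNReal.rpow_add _ _ (ENNReal.ofReal_pos.mpr hr0).ne' ENNReal.ofReal_ne_top]
    norm_num
  have step3 : ∫⁻ t in Ioi (0:ℝ), (ENNReal.ofReal t) ^ (-(1/2):ℝ) * V t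
      = ENNReal.ofReal π * ∫⁻ r in Ioi (0:ℝ), g r ^ (2:ℝ) := by
    rw [setLIntegral_congr_fun_ae measurableSet_Ioi unfold_t,
      lintegral_lintegral_swap hFmeas,
      setLIntegral_congr_fun_ae measurableSet_Ioi key_r,
      lintegral_const_mul' _ _ ENNReal.ofReal_ne_top]
  have sq : ENNReal.ofReal π ^ (2:ℝ) = ENNReal.ofReal π * ENNReal.ofReal π := by
    rw [show (2:ℝ) = ((2:ℕ):ℝ) by norm_num, ENNReal.rpow_natCast, sq]
  calc _ ≤ ENNReal.ofReal π *
        ∫⁻ t in Ioi (0:ℝ), (ENNReal.ofReal t) ^ (-(1/2):ℝ) * V t := step2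
    _ = ENNReal.ofReal π * (ENNReal.ofReal π * ∫⁻ r in Ioi (0:ℝ), g r ^ (2:ℝ)) := by
        rw [step3]
    _ = ENNReal.ofReal π ^ (2:ℝ) * ∫⁻ r in Ioi (0:ℝ), g r ^ (2:ℝ) := by
        rw [sq, mul_assoc]

/-- The operator A_n f(t) = (sin(πd)/π) ∫₀^∞ h(r)e^{-nr}/(e^{r+t}-1) f(r) dr is a
contraction on L²(ℝ₊) with constant 1-ε, ε = 1/2 - |sin(πd)|/2, for all n ≥ n₀. -/
theorem contraction_An (d : ℝ) (hd : d ∈ Set.Ioo (-(1:ℝ)/2) (1/2)) (hd0 : d ≠ 0)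
    (h : ℝ → ℝ) (hcont : ContinuousOn h (Ioi 0))
    (hlim : Filter.Tendsto h (nhdsWithin 0 (Ioi 0)) (nhds 1))
    (n₀ : ℕ)
    (hbnd : ∀ r : ℝ, 0 ≤ r → |h r * exp (-(n₀ : ℝ) * r)| < 1 + ((1/2) * |sin (π * d)|⁻¹ - 1/2)) :
    ∀ n : ℕ, n₀ ≤ n → ∀ f : ℝ → ℝ, MemLp f 2 (volume.restrict (Ioi 0)) →
      eLpNorm (fun t => (sin (π * d) / π) *
          ∫ r in Ioi (0:ℝ), h r * exp (-(n : ℝ) * r) / (exp (r + t) - 1) * f r) 2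
          (volume.restrict (Ioi 0))
        ≤ ENNReal.ofReal (1 - (1/2 - |sin (π * d)| / 2)) *
            eLpNorm f 2 (volume.restrict (Ioi 0)) := by
  intro n hn f hf
  -- basic positivity facts
  have hspos : 0 < |sin (π * d)| := by
    rcases lt_or_gt_of_ne hd0 with hdneg | hdpos
    · have h1 : 0 < sin (π * (-d)) := by
        apply Real.sin_pos_of_pos_of_lt_pi
        · have : 0 < -d := by linarith
          positivity
        · have hd2 : -d < 1/2 := by rcases hd with ⟨h1', _⟩; linarith
          nlinarith [Real.pi_pos]
      rw [mul_neg, Real.sin_neg] at h1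
      rw [abs_pos]
      intro hcontra
      rw [hcontra] at h1; simp at h1
    · rw [abs_pos]
      have h1 : 0 < sin (π * d) := by
        apply Real.sin_pos_of_pos_of_lt_pi
        · positivity
        · have hd2 : d < 1/2 := hd.2
          nlinarith [Real.pi_pos]
      exact h1.ne'
  set s : ℝ := |sin (π * d)| with hs
  set B : ℝ := 1 + ((1/2) * s⁻¹ - 1/2) with hB
  have hBpos : 0 < B := by
    rw [hB]
    have : 0 < s⁻¹ := inv_pos.mpr hspos
    linarith
  set c : ℝ := s / π * B with hc
  have hcpos : 0 < c := by
    have := Real.pi_pos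
    rw [hc]; positivity
  set g : ℝ → ℝ≥0∞ := fun r => (‖f r‖₊ : ℝ≥0∞) with hg
  have hgmeas : AEMeasurable g (volume.restrict (Ioi 0)) := hf.aestronglyMeasurable.enorm
  have hgfin : ∀ r, g r ≠ ⊤ := fun r => ENNReal.coe_ne_top
  set S : ℝ → ℝ≥0∞ := fun t => ∫⁻ r in Ioi (0:ℝ), g r * (ENNReal.ofReal (t + r))⁻¹ with hS
  -- pointwise bound
  have hpoint : ∀ t ∈ Ioi (0:ℝ),
      (‖(sin (π * d) / π) *
        ∫ r in Ioi (0:ℝ), h r * exp (-(n : ℝ) * r) / (exp (r + t) - 1) * f r‖₊ : ℝ≥0∞)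
      ≤ ENNReal.ofReal c * S t := by
    intro t ht
    have ht0 : (0:ℝ) < t := ht
    have hker : ∀ᵐ r ∂(volume : Measure ℝ), r ∈ Ioi (0:ℝ) →
        (‖h r * exp (-(n : ℝ) * r) / (exp (r + t) - 1) * f r‖₊ : ℝ≥0∞)
          ≤ ENNReal.ofReal B * (g r * (ENNReal.ofReal (t + r))⁻¹) := by
      refine Filter.Eventually.of_forall fun r hr => ?_
      have hr0 : (0:ℝ) < r := hr
      have hrt : (0:ℝ) < t + r := by linarith
      have hden : (0:ℝ) < exp (r + t) - 1 := by
        have := Real.add_one_le_exp (r + t)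
        nlinarith
      -- real bound on the kernel
      have habs : |h r * exp (-(n : ℝ) * r) / (exp (r + t) - 1)| ≤ B * (t + r)⁻¹ := by
        rw [abs_div, abs_of_pos hden]
        have hsplit : h r * exp (-(n : ℝ) * r)
            = (h r * exp (-(n₀ : ℝ) * r)) * exp (-((n : ℝ) - (n₀ : ℝ)) * r) := by
          rw [mul_assoc, ← Real.exp_add]
          ring_nf
        have hnum : |h r * exp (-(n : ℝ) * r)| ≤ B := by
          rw [hsplit, abs_mul]
          have h1 : |h r * exp (-(n₀ : ℝ) * r)| ≤ B := (hbnd r hr0.le).le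
          have h2 : |exp (-((n : ℝ) - (n₀ : ℝ)) * r)| ≤ 1 := by
            rw [abs_of_pos (Real.exp_pos _), Real.exp_le_one_iff]
            have hc' : (n₀ : ℝ) ≤ (n : ℝ) := Nat.cast_le.mpr hn
            nlinarith
          calc |h r * exp (-(n₀ : ℝ) * r)| * |exp (-((n : ℝ) - (n₀ : ℝ)) * r)|
              ≤ B * 1 := mul_le_mul h1 h2 (abs_nonneg _) hBpos.le
            _ = B := mul_one B
        have hinv : (exp (r + t) - 1)⁻¹ ≤ (t + r)⁻¹ := by
          apply inv_anti₀ (by linarith)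
          have := Real.add_one_le_exp (r + t)
          linarith
        calc |h r * exp (-(n : ℝ) * r)| / (exp (r + t) - 1)
            = |h r * exp (-(n : ℝ) * r)| * (exp (r + t) - 1)⁻¹ := div_eq_mul_inv _ _
          _ ≤ B * (t + r)⁻¹ := by
              apply mul_le_mul hnum hinv (inv_nonneg.mpr hden.le) hBpos.le
      -- lift to ℝ≥0∞
      rw [nnnorm_mul, ENNReal.coe_mul]
      have lift1 : ((‖h r * exp (-(n : ℝ) * r) / (exp (r + t) - 1)‖₊ : ℝ≥0∞))
          ≤ ENNReal.ofReal B * (ENNReal.ofReal (t + r))⁻¹ := by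
        rw [← ENNReal.ofReal_inv_of_pos hrt, ← ENNReal.ofReal_mul hBpos.le,
          ← enorm_eq_nnnorm, Real.enorm_eq_ofReal_abs]
        exact ENNReal.ofReal_le_ofReal habs
      calc (‖h r * exp (-(n : ℝ) * r) / (exp (r + t) - 1)‖₊ : ℝ≥0∞) * (‖f r‖₊ : ℝ≥0∞)
          ≤ (ENNReal.ofReal B * (ENNReal.ofReal (t + r))⁻¹) * g r :=
            mul_le_mul_left lift1 _
        _ = ENNReal.ofReal B * (g r * (ENNReal.ofReal (t + r))⁻¹) := by ring
    calc (‖(sin (π * d) / π) *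
        ∫ r in Ioi (0:ℝ), h r * exp (-(n : ℝ) * r) / (exp (r + t) - 1) * f r‖₊ : ℝ≥0∞)
        = (‖sin (π * d) / π‖₊ : ℝ≥0∞) *
          (‖∫ r in Ioi (0:ℝ), h r * exp (-(n : ℝ) * r) / (exp (r + t) - 1) * f r‖₊ : ℝ≥0∞) := by
          rw [nnnorm_mul, ENNReal.coe_mul]
      _ ≤ (‖sin (π * d) / π‖₊ : ℝ≥0∞) *
          ∫⁻ r in Ioi (0:ℝ), (‖h r * exp (-(n : ℝ) * r) / (exp (r + t) - 1) * f r‖₊ : ℝ≥0∞) :=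
          mul_le_mul_right (enorm_integral_le_lintegral_enorm _) _
      _ ≤ (‖sin (π * d) / π‖₊ : ℝ≥0∞) *
          ∫⁻ r in Ioi (0:ℝ), ENNReal.ofReal B * (g r * (ENNReal.ofReal (t + r))⁻¹) :=
          mul_le_mul_right (lintegral_mono_ae ((ae_restrict_iff' measurableSet_Ioi).mpr hker)) _
      _ = (‖sin (π * d) / π‖₊ : ℝ≥0∞) * (ENNReal.ofReal B * S t) := by
          rw [lintegral_const_mul' _ _ ENNReal.ofReal_ne_top]
      _ = ENNReal.ofReal c * S t := by
          rw [← enorm_eq_nnnorm, Real.enorm_eq_ofReal_abs, abs_div, abs_of_pos Real.pi_pos,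
            ← mul_assoc, ← ENNReal.ofReal_mul (by positivity)]
  -- assemble
  have hp1 : (2:ℝ≥0∞).toReal = (2:ℝ) := by simp
  rw [eLpNorm_eq_lintegral_rpow_enorm_toReal two_ne_zero ENNReal.ofNat_ne_top,
    eLpNorm_eq_lintegral_rpow_enorm_toReal two_ne_zero ENNReal.ofNat_ne_top, hp1]
  have main : ∫⁻ t in Ioi (0:ℝ),
      (‖(sin (π * d) / π) *
        ∫ r in Ioi (0:ℝ), h r * exp (-(n : ℝ) * r) / (exp (r + t) - 1) * f r‖₊ : ℝ≥0∞) ^ (2:ℝ)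
      ≤ ENNReal.ofReal c ^ (2:ℝ) * (ENNReal.ofReal π ^ (2:ℝ) *
          ∫⁻ r in Ioi (0:ℝ), g r ^ (2:ℝ)) := by
    calc ∫⁻ t in Ioi (0:ℝ), (‖(sin (π * d) / π) *
        ∫ r in Ioi (0:ℝ), h r * exp (-(n : ℝ) * r) / (exp (r + t) - 1) * f r‖₊ : ℝ≥0∞) ^ (2:ℝ)
        ≤ ∫⁻ t in Ioi (0:ℝ), (ENNReal.ofReal c * S t) ^ (2:ℝ) := by
          refine lintegral_mono_ae ((ae_restrict_iff' measurableSet_Ioi).mpr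
            (Filter.Eventually.of_forall fun t ht => ?_))
          exact ENNReal.rpow_le_rpow (hpoint t ht) (by norm_num)
      _ = ENNReal.ofReal c ^ (2:ℝ) * ∫⁻ t in Ioi (0:ℝ), S t ^ (2:ℝ) := by
          rw [← lintegral_const_mul' _ _
            (ENNReal.rpow_ne_top_of_nonneg (by norm_num) ENNReal.ofReal_ne_top)]
          refine lintegral_congr fun t => ?_
          rw [ENNReal.mul_rpow_of_nonneg _ _ (by norm_num : (0:ℝ) ≤ 2)]
      _ ≤ ENNReal.ofReal c ^ (2:ℝ) * (ENNReal.ofReal π ^ (2:ℝ) *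
            ∫⁻ r in Ioi (0:ℝ), g r ^ (2:ℝ)) :=
          mul_le_mul_right (schurBound hgmeas hgfin) _
  calc (∫⁻ t in Ioi (0:ℝ), (‖(sin (π * d) / π) *
        ∫ r in Ioi (0:ℝ), h r * exp (-(n : ℝ) * r) / (exp (r + t) - 1) * f r‖₊ : ℝ≥0∞) ^ (2:ℝ))
          ^ ((1:ℝ)/2)
      ≤ (ENNReal.ofReal c ^ (2:ℝ) * (ENNReal.ofReal π ^ (2:ℝ) *
          ∫⁻ r in Ioi (0:ℝ), g r ^ (2:ℝ))) ^ ((1:ℝ)/2) :=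
        ENNReal.rpow_le_rpow main (by norm_num)
    _ = ENNReal.ofReal c * ENNReal.ofReal π *
        (∫⁻ r in Ioi (0:ℝ), g r ^ (2:ℝ)) ^ ((1:ℝ)/2) := by
        rw [ENNReal.mul_rpow_of_nonneg _ _ (by norm_num : (0:ℝ) ≤ 1/2),
          ENNReal.mul_rpow_of_nonneg _ _ (by norm_num : (0:ℝ) ≤ 1/2),
          ← ENNReal.rpow_mul, ← ENNReal.rpow_mul]
        norm_num
        ring
    _ = ENNReal.ofReal (1 - (1/2 - |sin (π * d)| / 2)) *
        (∫⁻ r in Ioi (0:ℝ), g r ^ (2:ℝ)) ^ ((1:ℝ)/2) := by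
        rw [← ENNReal.ofReal_mul hcpos.le]
        have hπ : (π:ℝ) ≠ 0 := Real.pi_ne_zero
        have hsne : s ≠ 0 := hspos.ne'
        have harg : c * π = 1 - (1/2 - s/2) := by
          rw [hc, hB]
          field_simp
          ring
        rw [harg]
end
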